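/- arXiv:2108.06739 — 3 statements merged into one kernel-verified Lean document; each statement's English description precedes it below -/
import Mathlib

section
/- Suppose k < b < 0 with b < -2 and k < b²/(b+2). Then the map f(x) = b + x - k/(1+e^x) has a period-2 orbit: there exist real numbers x₁ < x* < x₂ such that f(x₁) = x₂ and f(x₂) = x₁, where x* = ln(k/b - 1) is the fixed point of f. -/
open Real Set

private noncomputable def hfun (k : ℝ) (u : ℝ) : ℝ :=
  2 * Real.log (1 - u) - 2 * Real.log u - k * u

private lemma hfun_hasDerivAt (k u : ℝ) (h0 : 0 < u) (h1 : u < 1) :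
    HasDerivAt (hfun k) (-2 / (1 - u) - 2 / u - k) u := by
  have hu1 : (1 : ℝ) - u ≠ 0 := by linarith
  have d1 : HasDerivAt (fun x : ℝ => Real.log (1 - x)) (-(1 - u)⁻¹) u := by
    have h := (Real.hasDerivAt_log hu1).comp u ((hasDerivAt_id u).const_sub 1)
    simp at h
    exact h
  have d2 : HasDerivAt (fun x : ℝ => Real.log x) u⁻¹ u := Real.hasDerivAt_log (ne_of_gt h0)
  have d3 : HasDerivAt (fun x : ℝ => k * x) k u := by
    simpa using (hasDerivAt_id u).const_mul k
  have h := ((d1.const_mul 2).sub (d2.const_mul 2)).sub d3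
  rw [show -2 / (1 - u) - 2 / u - k = 2 * -(1 - u)⁻¹ - 2 * u⁻¹ - k by ring]
  exact h

private lemma hfun_continuousAt (k u : ℝ) (h0 : 0 < u) (h1 : u < 1) :
    ContinuousAt (hfun k) u :=
  (hfun_hasDerivAt k u h0 h1).continuousAt


set_option maxHeartbeats 1000000 in

/-- For k < b < 0 with b < -2 and k < b²/(b+2), the map f has a period-2 orbit
straddling the fixed point x* = ln(k/b - 1). -/
theorem exists_period_two_orbit (b k : ℝ) (hkb : k < b) (hb : b < 0)
    (hb2 : b < -2) (hk : k < b ^ 2 / (b + 2)) :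
    ∃ x₁ x₂ : ℝ, x₁ < Real.log (k / b - 1) ∧ Real.log (k / b - 1) < x₂ ∧
      b + x₁ - k / (1 + Real.exp x₁) = x₂ ∧
      b + x₂ - k / (1 + Real.exp x₂) = x₁ := by

  have hk0 : k < 0 := hkb.trans hb
  have hknz : k ≠ 0 := ne_of_lt hk0
  have hbnz : b ≠ 0 := ne_of_lt hb
  have hnk : 0 < -k := by linarith
  have hkey : b ^ 2 < k * (b + 2) := (lt_div_iff_of_neg (by linarith)).mp hk
  -- the fixed-point coordinate w = b/k
  obtain ⟨w, hkw, hw0, hw1, hrw⟩ :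
      ∃ w : ℝ, k * w = b ∧ 0 < w ∧ w < 1 ∧ k / b - 1 = (1 - w) / w := by
    refine ⟨b / k, mul_div_cancel₀ b hknz, div_pos_iff.mpr (Or.inr ⟨hb, hk0⟩), ?_, ?_⟩
    · have h := mul_div_cancel₀ b hknz
      nlinarith [div_pos_iff.mpr (Or.inr ⟨hb, hk0⟩)]
    · field_simp
  -- the derivative-positivity constant c
  obtain ⟨c, hc0, hckc, hd⟩ :
      ∃ c : ℝ, 0 < c ∧ c * (-k) = 2 ∧ c < w * (1 - w) := by
    refine ⟨2 / (-k), div_pos two_pos hnk, div_mul_cancel₀ 2 (ne_of_gt hnk), ?_⟩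
    rw [div_lt_iff₀ hnk]
    nlinarith [hkw, hkey]
  have hpos01 : ∀ u : ℝ, c < u * (1 - u) → 0 < u ∧ u < 1 := by
    intro u h
    constructor
    · nlinarith [sq_nonneg u]
    · nlinarith [sq_nonneg (u - 1)]
  -- window radius δ
  obtain ⟨δ, hδ0, hwindow⟩ :
      ∃ δ : ℝ, 0 < δ ∧ ∀ u : ℝ, w - δ ≤ u → u ≤ w + δ → c < u * (1 - u) := by
    refine ⟨min ((w * (1 - w) - c) / 4) 1, lt_min (by linarith) one_pos, ?_⟩
    intro u h1 h2
    have hδ1 : min ((w * (1 - w) - c) / 4) 1 ≤ 1 := min_le_right _ _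
    have hδd : min ((w * (1 - w) - c) / 4) 1 ≤ (w * (1 - w) - c) / 4 := min_le_left _ _
    nlinarith [mul_nonneg (by linarith : (0:ℝ) ≤ min ((w * (1 - w) - c) / 4) 1 - (u - w))
        (by linarith : (0:ℝ) ≤ 2 + (1 - u - w)),
      mul_nonneg (by linarith : (0:ℝ) ≤ (u - w) + min ((w * (1 - w) - c) / 4) 1)
        (by linarith : (0:ℝ) ≤ 2 - (1 - u - w))]
  -- strict monotonicity on the window
  have hmono : StrictMonoOn (hfun k) (Icc (w - δ) (w + δ)) := by
    apply strictMonoOn_of_deriv_pos (convex_Icc _ _)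
    · intro u hu
      obtain ⟨h0, h1⟩ := hpos01 u (hwindow u hu.1 hu.2)
      exact (hfun_continuousAt k u h0 h1).continuousWithinAt
    · intro u hu
      rw [interior_Icc] at hu
      have hcu := hwindow u hu.1.le hu.2.le
      obtain ⟨h0, h1⟩ := hpos01 u hcu
      rw [(hfun_hasDerivAt k u h0 h1).deriv]
      have hu1 : 0 < 1 - u := by linarith
      have heq : -2 / (1 - u) - 2 / u - k = ((-k) * (u * (1 - u)) - 2) / (u * (1 - u)) := by
        field_simp
        ring
      rw [heq]
      apply div_pos _ (mul_pos h0 hu1)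
      have h2 : c * (-k) < (u * (1 - u)) * (-k) := mul_lt_mul_of_pos_right hcu hnk
      rw [hckc] at h2
      linarith
  -- the far point u₂
  obtain ⟨u₂, hwu₂, hu₂1, hv₂0, hψu₂⟩ :
      ∃ u₂ : ℝ, w < u₂ ∧ u₂ < 1 ∧ 0 < 2 * w - u₂ ∧
        hfun k u₂ < hfun k (2 * w - u₂) := by
    obtain ⟨C, hCeq⟩ : ∃ C : ℝ, C = -2 * Real.log w - k - 2 * Real.log (1 - w) := ⟨_, rfl⟩
    obtain ⟨m, hwm, hm1, hm2w, hmor⟩ :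
        ∃ m : ℝ, w < m ∧ m ≤ 1 ∧ m ≤ 2 * w ∧ (m = 1 ∨ m = 2 * w) := by
      refine ⟨min 1 (2 * w), lt_min (by linarith) (by linarith),
        min_le_left _ _, min_le_right _ _, ?_⟩
      rcases le_total 1 (2 * w) with hmm | hmm
      · exact Or.inl (min_eq_left hmm)
      · exact Or.inr (min_eq_right hmm)
    obtain ⟨ε, hε0, hερ, hε1, hεC⟩ :
        ∃ ε : ℝ, 0 < ε ∧ ε ≤ (m - w) / 2 ∧ ε ≤ 1 ∧ 4 * ε < Real.exp (-(C / 2)) := by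
      refine ⟨min ((m - w) / 2) (min 1 (Real.exp (-(C / 2)) / 8)),
        lt_min (by linarith) (lt_min one_pos (by positivity)),
        min_le_left _ _, (min_le_right _ _).trans (min_le_left _ _), ?_⟩
      have h1 : min ((m - w) / 2) (min 1 (Real.exp (-(C / 2)) / 8)) ≤
          Real.exp (-(C / 2)) / 8 := (min_le_right _ _).trans (min_le_right _ _)
      have h2 := Real.exp_pos (-(C / 2))
      linarith
    refine ⟨m - ε, by linarith, by linarith, by linarith, ?_⟩
    have hv₂0 : 0 < 2 * w - (m - ε) := by linarith
    have hv₂w : 2 * w - (m - ε) < w := by linarith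
    have hu₂0 : 0 < m - ε := by linarith
    have h1u₂ : ε ≤ 1 - (m - ε) := by linarith
    have hqs : (1 - (m - ε)) * (2 * w - (m - ε)) ≤ 4 * ε := by
      rcases hmor with hm' | hm' <;> rw [hm'] <;> nlinarith
    have hlw : Real.log w < Real.log (m - ε) := Real.log_lt_log hw0 (by linarith)
    have hku : k ≤ k * (m - ε) := by
      have h := mul_nonneg (le_of_lt hnk) (by linarith : (0:ℝ) ≤ 1 - (m - ε))
      linarith
    have hl1 : Real.log (1 - w) ≤ Real.log (1 - (2 * w - (m - ε))) := by
      apply Real.log_le_log (by linarith)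
      linarith
    have hkv : k * (2 * w - (m - ε)) ≤ 0 := by
      have h := mul_nonneg (le_of_lt hnk) (le_of_lt hv₂0)
      linarith
    have hlmul : Real.log (1 - (m - ε)) + Real.log (2 * w - (m - ε)) =
        Real.log ((1 - (m - ε)) * (2 * w - (m - ε))) :=
      (Real.log_mul (by linarith) (ne_of_gt hv₂0)).symm
    have hl4e : Real.log ((1 - (m - ε)) * (2 * w - (m - ε))) ≤ Real.log (4 * ε) :=
      Real.log_le_log (mul_pos (by linarith) hv₂0) hqs
    have hl4e2 : Real.log (4 * ε) < -(C / 2) := by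
      rw [Real.log_lt_iff_lt_exp (by linarith)]
      exact hεC
    rw [hCeq] at hl4e2
    simp only [hfun]
    linarith
  -- the near point a
  obtain ⟨a, hwa, hau₂, hψa⟩ :
      ∃ a : ℝ, w < a ∧ a ≤ u₂ ∧ hfun k (2 * w - a) < hfun k a := by
    refine ⟨w + min δ ((u₂ - w) / 2), ?_, ?_, ?_⟩
    · have := lt_min hδ0 (by linarith : (0:ℝ) < (u₂ - w) / 2)
      linarith
    · have := min_le_right δ ((u₂ - w) / 2)
      linarith
    · have h1 := min_le_left δ ((u₂ - w) / 2)
      have h2 := lt_min hδ0 (by linarith : (0:ℝ) < (u₂ - w) / 2)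
      apply hmono
      · exact ⟨by linarith, by linarith⟩
      · exact ⟨by linarith, by linarith⟩
      · linarith
  -- IVT for ψ u = hfun k u - hfun k (2w - u)
  have hcont : ContinuousOn (fun u => hfun k u - hfun k (2 * w - u)) (Icc a u₂) := by
    intro u hu
    obtain ⟨hu1, hu2⟩ := hu
    have h0u : 0 < u := by linarith
    have h1u : u < 1 := lt_of_le_of_lt hu2 hu₂1
    have hvu0 : 0 < 2 * w - u := by linarith
    have hvu1 : 2 * w - u < 1 := by linarith
    apply ContinuousWithinAt.sub
    · exact (hfun_continuousAt k u h0u h1u).continuousWithinAt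
    · exact ((hfun_continuousAt k (2 * w - u) hvu0 hvu1).comp
        ((continuous_const.sub continuous_id).continuousAt)).continuousWithinAt
  have hζ : (0 : ℝ) ∈ Icc (hfun k u₂ - hfun k (2 * w - u₂)) (hfun k a - hfun k (2 * w - a)) :=
    ⟨by linarith, by linarith⟩
  obtain ⟨u, humem, hu0⟩ := intermediate_value_Icc' hau₂ hcont hζ
  -- conclude
  obtain ⟨hua, huu₂⟩ := humem
  have h0u : 0 < u := by linarith
  have hwu : w < u := lt_of_lt_of_le hwa hua
  have h1u : u < 1 := lt_of_le_of_lt huu₂ hu₂1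
  have hv0 : 0 < 2 * w - u := by linarith
  have hvw : 2 * w - u < w := by linarith
  have hv1 : 2 * w - u < 1 := lt_trans hvw hw1
  have hfeq : hfun k u = hfun k (2 * w - u) := by
    simp only at hu0
    linarith
  refine ⟨Real.log ((1 - u) / u), Real.log ((1 - (2 * w - u)) / (2 * w - u)), ?_, ?_, ?_, ?_⟩
  · rw [hrw]
    apply Real.log_lt_log (div_pos (by linarith) h0u)
    rw [div_lt_div_iff₀ h0u hw0]
    nlinarith
  · rw [hrw]
    apply Real.log_lt_log (div_pos (by linarith) hw0)
    rw [div_lt_div_iff₀ hw0 hv0]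
    nlinarith
  · rw [Real.exp_log (div_pos (by linarith) h0u)]
    have h1pe : 1 + (1 - u) / u = 1 / u := by field_simp; ring
    rw [h1pe, one_div, div_inv_eq_mul]
    rw [Real.log_div (by linarith : (1:ℝ) - u ≠ 0) (ne_of_gt h0u),
        Real.log_div (by linarith : (1:ℝ) - (2 * w - u) ≠ 0) (ne_of_gt hv0)]
    simp only [hfun] at hfeq
    nlinarith [hfeq, hkw]
  · rw [Real.exp_log (div_pos (by linarith) hv0)]
    have h1pe : 1 + (1 - (2 * w - u)) / (2 * w - u) = 1 / (2 * w - u) := by field_simp; ring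
    rw [h1pe, one_div, div_inv_eq_mul]
    rw [Real.log_div (by linarith : (1:ℝ) - u ≠ 0) (ne_of_gt h0u),
        Real.log_div (by linarith : (1:ℝ) - (2 * w - u) ≠ 0) (ne_of_gt hv0)]
    simp only [hfun] at hfeq
    nlinarith [hfeq, hkw]
end

section
/- For parameters satisfying k < b < 0, b < -2 and k < b²/(b+2), the map f(x) = b + x - k/(1+e^x) has at most one period-2 orbit: if {x₁, x₂} and {y₁, y₂} are two-cycles of f (with x₁ ≠ x₂, y₁ ≠ y₂), then {x₁, x₂} = {y₁, y₂}. -/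
open Real Set

/-- The auxiliary function whose zeros encode two-cycles. -/
noncomputable def gfun (c k d : ℝ) : ℝ :=
  Real.log (1 - c + d) - Real.log (c - d) - Real.log (1 - c - d) + Real.log (c + d) + k * d

lemma log_ratio (x : ℝ) :
    Real.log (1 - 1 / (1 + Real.exp x)) - Real.log (1 / (1 + Real.exp x)) = x := by
  have h : (0:ℝ) < 1 + Real.exp x := by positivity
  have h1 : 1 - 1 / (1 + Real.exp x) = Real.exp x / (1 + Real.exp x) := by
    field_simp
    ring
  rw [h1, Real.log_div (Real.exp_ne_zero x) h.ne', Real.log_div one_ne_zero h.ne',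
    Real.log_exp, Real.log_one]
  ring

lemma A_inj {a b : ℝ} (h : 1 / (1 + Real.exp a) = 1 / (1 + Real.exp b)) : a = b := by
  have ha : (0:ℝ) < 1 + Real.exp a := by positivity
  have hb : (0:ℝ) < 1 + Real.exp b := by positivity
  field_simp at h
  exact Real.exp_injective (by linarith)

lemma gfun_hasDeriv (c k x : ℝ) (h1 : 0 < c - x) (h2 : 0 < c + x)
    (h3 : 0 < 1 - c - x) (h4 : 0 < 1 - c + x) :
    HasDerivAt (gfun c k)
      (1 / (1 - c + x) + 1 / (c - x) + 1 / (1 - c - x) + 1 / (c + x) + k) x := by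
  have d1 : HasDerivAt (fun d : ℝ => 1 - c + d) 1 x := by
    simpa using (hasDerivAt_id x).const_add (1 - c)
  have d2 : HasDerivAt (fun d : ℝ => c - d) (-1) x := by
    exact (hasDerivAt_id x).const_sub c
  have d3 : HasDerivAt (fun d : ℝ => 1 - c - d) (-1) x := by
    exact (hasDerivAt_id x).const_sub (1 - c)
  have d5 : HasDerivAt (fun d : ℝ => c + d) 1 x := by
    simpa using (hasDerivAt_id x).const_add c
  have l1 := d1.log h4.ne'
  have l2 := d2.log h1.ne'
  have l3 := d3.log h3.ne'
  have l5 := d5.log h2.ne'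
  have lk : HasDerivAt (fun d : ℝ => k * d) k x := by
    simpa using (hasDerivAt_id x).const_mul k
  have := (((l1.sub l2).sub l3).add l5).add lk
  have heq : gfun c k = fun d => Real.log (1 - c + d) - Real.log (c - d)
      - Real.log (1 - c - d) + Real.log (c + d) + k * d := rfl
  rw [heq]
  refine this.congr_deriv ?_
  ring

lemma m_mono (c d₁ d₂ : ℝ) (hc : 0 < c) (hc1 : c < 1) (h0 : 0 ≤ d₁) (h12 : d₁ < d₂)
    (h2c : d₂ < c) (h2c' : d₂ < 1 - c) :
    1 / (1 - c + d₁) + 1 / (c - d₁) + 1 / (1 - c - d₁) + 1 / (c + d₁) <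
    1 / (1 - c + d₂) + 1 / (c - d₂) + 1 / (1 - c - d₂) + 1 / (c + d₂) := by
  have key : ∀ d : ℝ, 0 ≤ d → d < c → d < 1 - c →
      1 / (1 - c + d) + 1 / (c - d) + 1 / (1 - c - d) + 1 / (c + d) =
      2 * (c * (1 - c) - d ^ 2) / (((c - d) * (c + d)) * ((1 - c - d) * (1 - c + d))) := by
    intro d hd hdc hdc'
    have p1 : 0 < c - d := by linarith
    have p2 : 0 < c + d := by linarith
    have p3 : 0 < 1 - c - d := by linarith
    have p4 : 0 < 1 - c + d := by linarith
    field_simp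
    ring
  rw [key d₁ h0 (by linarith) (by linarith), key d₂ (by linarith) h2c h2c']
  have A1pos : 0 < ((c - d₁) * (c + d₁)) * ((1 - c - d₁) * (1 - c + d₁)) := by
    have : 0 < c - d₁ := by linarith
    have : 0 < c + d₁ := by linarith
    have : 0 < 1 - c - d₁ := by linarith
    have : 0 < 1 - c + d₁ := by linarith
    positivity
  have A2pos : 0 < ((c - d₂) * (c + d₂)) * ((1 - c - d₂) * (1 - c + d₂)) := by
    have : 0 < c - d₂ := by linarith
    have : 0 < c + d₂ := by linarith
    have : 0 < 1 - c - d₂ := by linarith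
    have : 0 < 1 - c + d₂ := by linarith
    positivity
  rw [div_lt_div_iff₀ A1pos A2pos]
  have ht1 : d₁ ^ 2 < c * (1 - c) := by nlinarith
  have ht2 : d₂ ^ 2 < c * (1 - c) := by nlinarith
  have ht12 : d₁ ^ 2 < d₂ ^ 2 := by nlinarith
  nlinarith [mul_pos (sub_pos.2 ht1) (sub_pos.2 ht2), sq_nonneg (1 - 2 * c),
    mul_pos hc (by linarith : (0:ℝ) < 1 - c),
    mul_pos (sub_pos.2 ht12)
      (add_pos_of_pos_of_nonneg (mul_pos (sub_pos.2 ht1) (sub_pos.2 ht2))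
        (mul_nonneg (mul_pos hc (by linarith : (0:ℝ) < 1 - c)).le (sq_nonneg (1 - 2 * c))))]

lemma gfun_zero (c k : ℝ) : gfun c k 0 = 0 := by
  simp [gfun]

lemma d_unique (c k d e : ℝ) (hc : 0 < c) (hc1 : c < 1)
    (hd : 0 < d) (hdc : d < c) (hdc' : d < 1 - c)
    (he : 0 < e) (hec : e < c) (hec' : e < 1 - c)
    (hgd : gfun c k d = 0) (hge : gfun c k e = 0) : d = e := by
  -- helper: no two zeros 0 < d < e are possible
  have key : ∀ d e : ℝ, 0 < d → d < e → e < c → e < 1 - c →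
      gfun c k d = 0 → gfun c k e = 0 → False := by
    intro d e hd hde hec hec' hgd hge
    set gp : ℝ → ℝ := fun x => 1 / (1 - c + x) + 1 / (c - x) + 1 / (1 - c - x) + 1 / (c + x) + k
      with hgp
    have hder : ∀ x ∈ Icc (0:ℝ) e, HasDerivAt (gfun c k) (gp x) x := by
      intro x hx
      have := gfun_hasDeriv c k x (by have := hx.2; linarith) (by have := hx.1; linarith)
        (by have := hx.2; linarith) (by have := hx.1; linarith)
      simpa [hgp] using this
    have hcont : ContinuousOn (gfun c k) (Icc 0 e) := fun x hx =>
      (hder x hx).continuousAt.continuousWithinAt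
    obtain ⟨ξ₁, hξ₁, hz1⟩ := exists_hasDerivAt_eq_zero (f := gfun c k) (f' := gp) hd
      (hcont.mono (Icc_subset_Icc le_rfl (le_of_lt hde)))
      (by rw [gfun_zero, hgd])
      (fun x hx => hder x ⟨hx.1.le, le_trans hx.2.le hde.le⟩)
    obtain ⟨ξ₂, hξ₂, hz2⟩ := exists_hasDerivAt_eq_zero (f := gfun c k) (f' := gp) hde
      (hcont.mono (Icc_subset_Icc hd.le le_rfl))
      (by rw [hgd, hge])
      (fun x hx => hder x ⟨le_trans hd.le hx.1.le, hx.2.le⟩)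
    have hmono := m_mono c ξ₁ ξ₂ hc hc1 hξ₁.1.le (lt_trans hξ₁.2 hξ₂.1)
      (lt_trans hξ₂.2 hec) (lt_trans hξ₂.2 hec')
    simp only [hgp] at hz1 hz2
    linarith
  rcases lt_trichotomy d e with h | h | h
  · exact absurd (key d e hd h hec hec' hgd hge) (not_false)
  · exact h
  · exact absurd (key e d he h hdc hdc' hge hgd) (not_false)

lemma cycle_reduce (b k : ℝ) (hkb : k < b) (hb : b < 0) (x₁ x₂ : ℝ) (hx : x₁ ≠ x₂)
    (h1 : b + x₁ - k / (1 + Real.exp x₁) = x₂)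
    (h2 : b + x₂ - k / (1 + Real.exp x₂) = x₁) :
    ∃ d : ℝ, 0 < d ∧ d < b / k ∧ d < 1 - b / k ∧ gfun (b / k) k d = 0 ∧
      ((1 / (1 + Real.exp x₁) = b / k - d ∧ 1 / (1 + Real.exp x₂) = b / k + d) ∨
       (1 / (1 + Real.exp x₁) = b / k + d ∧ 1 / (1 + Real.exp x₂) = b / k - d)) := by
  have hk : k < 0 := lt_trans hkb hb
  have hk0 : k ≠ 0 := hk.ne
  set A₁ := 1 / (1 + Real.exp x₁) with hA₁
  set A₂ := 1 / (1 + Real.exp x₂) with hA₂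
  have hE₁ : (0:ℝ) < 1 + Real.exp x₁ := by positivity
  have hE₂ : (0:ℝ) < 1 + Real.exp x₂ := by positivity
  have hA₁pos : 0 < A₁ := by rw [hA₁]; positivity
  have hA₂pos : 0 < A₂ := by rw [hA₂]; positivity
  have hA₁lt : A₁ < 1 := by
    rw [hA₁, div_lt_one hE₁]; linarith [Real.exp_pos x₁]
  have hA₂lt : A₂ < 1 := by
    rw [hA₂, div_lt_one hE₂]; linarith [Real.exp_pos x₂]
  have hq1 : k / (1 + Real.exp x₁) = k * A₁ := by rw [hA₁, mul_one_div]
  have hq2 : k / (1 + Real.exp x₂) = k * A₂ := by rw [hA₂, mul_one_div]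
  rw [hq1] at h1
  rw [hq2] at h2
  have hsum : k * (A₁ + A₂) = 2 * b := by linarith
  have hdiff : 2 * (x₁ - x₂) = k * A₁ - k * A₂ := by linarith
  set c := b / k with hc
  have hsum' : A₁ + A₂ = 2 * c := by
    rw [hc]
    field_simp
    linarith
  have hAx : Real.log (1 - A₁) - Real.log A₁ = x₁ := log_ratio x₁
  have hAy : Real.log (1 - A₂) - Real.log A₂ = x₂ := log_ratio x₂
  have hAne : A₁ ≠ A₂ := by
    intro h
    apply hx
    rw [← hAx, ← hAy, h]
  rcases lt_or_gt_of_ne hAne with hlt | hgt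
  · refine ⟨(A₂ - A₁) / 2, by linarith, ?_, ?_, ?_, Or.inl ⟨by linarith, by linarith⟩⟩
    · -- d < c : c - d = A₁ + ... ;  c = (A₁+A₂)/2
      have : c - (A₂ - A₁) / 2 = A₁ := by linarith
      linarith
    · have : c + (A₂ - A₁) / 2 = A₂ := by linarith
      linarith
    · have e1 : 1 - c + (A₂ - A₁) / 2 = 1 - A₁ := by linarith
      have e2 : c - (A₂ - A₁) / 2 = A₁ := by linarith
      have e3 : 1 - c - (A₂ - A₁) / 2 = 1 - A₂ := by linarith
      have e4 : c + (A₂ - A₁) / 2 = A₂ := by linarith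
      unfold gfun
      rw [e1, e2, e3, e4]
      linear_combination hAx - hAy + hdiff / 2
  · refine ⟨(A₁ - A₂) / 2, by linarith, ?_, ?_, ?_, Or.inr ⟨by linarith, by linarith⟩⟩
    · have : c - (A₁ - A₂) / 2 = A₂ := by linarith
      linarith
    · have : c + (A₁ - A₂) / 2 = A₁ := by linarith
      linarith
    · have e1 : 1 - c + (A₁ - A₂) / 2 = 1 - A₂ := by linarith
      have e2 : c - (A₁ - A₂) / 2 = A₂ := by linarith
      have e3 : 1 - c - (A₁ - A₂) / 2 = 1 - A₁ := by linarith
      have e4 : c + (A₁ - A₂) / 2 = A₁ := by linarith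
      unfold gfun
      rw [e1, e2, e3, e4]
      linear_combination hAy - hAx - hdiff / 2

/-- For k < b < 0, b < -2, k < b²/(b+2), the map f has at most one period-2
orbit. -/
theorem period_two_unique (b k : ℝ) (hkb : k < b) (hb : b < 0)
    (hb2 : b < -2) (hk : k < b ^ 2 / (b + 2)) (x₁ x₂ y₁ y₂ : ℝ)
    (hx : x₁ ≠ x₂) (hy : y₁ ≠ y₂)
    (hfx1 : b + x₁ - k / (1 + Real.exp x₁) = x₂)
    (hfx2 : b + x₂ - k / (1 + Real.exp x₂) = x₁)
    (hfy1 : b + y₁ - k / (1 + Real.exp y₁) = y₂)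
    (hfy2 : b + y₂ - k / (1 + Real.exp y₂) = y₁) :
    ({x₁, x₂} : Set ℝ) = {y₁, y₂} := by
  have hkneg : k < 0 := lt_trans hkb hb
  have hcpos : 0 < b / k := div_pos_of_neg_of_neg hb hkneg
  have hclt : b / k < 1 := by
    have h := div_neg_of_pos_of_neg (sub_pos.2 hkb) hkneg
    rw [sub_div, div_self hkneg.ne] at h
    linarith
  obtain ⟨d, hd, hdc, hdc', hgd, hdx⟩ := cycle_reduce b k hkb hb x₁ x₂ hx hfx1 hfx2
  obtain ⟨e, he, hec, hec', hge, hey⟩ := cycle_reduce b k hkb hb y₁ y₂ hy hfy1 hfy2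
  have hde : d = e := d_unique (b / k) k d e hcpos hclt hd hdc hdc' he hec hec' hgd hge
  subst hde
  rcases hdx with ⟨p1, p2⟩ | ⟨p1, p2⟩ <;> rcases hey with ⟨q1, q2⟩ | ⟨q1, q2⟩
  · rw [A_inj (p1.trans q1.symm), A_inj (p2.trans q2.symm)]
  · rw [A_inj (p1.trans q2.symm), A_inj (p2.trans q1.symm), Set.pair_comm]
  · rw [A_inj (p1.trans q2.symm), A_inj (p2.trans q1.symm), Set.pair_comm]
  · rw [A_inj (p1.trans q1.symm), A_inj (p2.trans q2.symm)]
end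

section
/- For the map f(x) = b + x - k/(1+e^x) with k < -4, the Schwarzian derivative Sf(x) = f'''(x)/f'(x) - (3/2)(f''(x)/f'(x))² is strictly negative at every point where f'(x) ≠ 0; explicitly, Sf(x) = k e^x (2(e^x - 1)² - (k+4) e^x) / (2((e^x+1)² + k e^x)²) < 0. -/
private lemma one_add_exp_pos (y : ℝ) : 0 < 1 + Real.exp y := by
  positivity

private lemma one_add_exp_ne (y : ℝ) : (1 + Real.exp y) ≠ 0 :=
  (one_add_exp_pos y).ne'

private lemma hd_f (b k x : ℝ) :
    HasDerivAt (fun y : ℝ => b + y - k / (1 + Real.exp y))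
      (1 + k * Real.exp x / (1 + Real.exp x) ^ 2) x := by
  have h1 : HasDerivAt (fun y : ℝ => b + y) 1 x := (hasDerivAt_id x).const_add b
  have h2 : HasDerivAt (fun y : ℝ => 1 + Real.exp y) (Real.exp x) x :=
    (Real.hasDerivAt_exp x).const_add 1
  have h3 : HasDerivAt (fun y : ℝ => k / (1 + Real.exp y))
      ((0 * (1 + Real.exp x) - k * Real.exp x) / (1 + Real.exp x) ^ 2) x :=
    (hasDerivAt_const x k).div h2 (one_add_exp_ne x)
  have := h1.sub h3
  refine this.congr_deriv ?_
  field_simp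
  ring

private lemma hd_g1 (k x : ℝ) :
    HasDerivAt (fun y : ℝ => 1 + k * Real.exp y / (1 + Real.exp y) ^ 2)
      (k * Real.exp x * (1 - Real.exp x) / (1 + Real.exp x) ^ 3) x := by
  have h2 : HasDerivAt (fun y : ℝ => 1 + Real.exp y) (Real.exp x) x :=
    (Real.hasDerivAt_exp x).const_add 1
  have hnum : HasDerivAt (fun y : ℝ => k * Real.exp y) (k * Real.exp x) x :=
    (Real.hasDerivAt_exp x).const_mul k
  have hden : HasDerivAt (fun y : ℝ => (1 + Real.exp y) ^ 2)
      (2 * (1 + Real.exp x) ^ 1 * Real.exp x) x := h2.pow 2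
  have hne : ((1 + Real.exp x) ^ 2) ≠ 0 := pow_ne_zero 2 (one_add_exp_ne x)
  have := (hnum.div hden hne).const_add 1
  refine this.congr_deriv ?_
  field_simp
  ring

private lemma hd_g2 (k x : ℝ) :
    HasDerivAt (fun y : ℝ => k * Real.exp y * (1 - Real.exp y) / (1 + Real.exp y) ^ 3)
      (k * Real.exp x * (1 - 4 * Real.exp x + Real.exp x ^ 2) / (1 + Real.exp x) ^ 4) x := by
  have h2 : HasDerivAt (fun y : ℝ => 1 + Real.exp y) (Real.exp x) x :=
    (Real.hasDerivAt_exp x).const_add 1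
  have hnum : HasDerivAt (fun y : ℝ => k * Real.exp y * (1 - Real.exp y))
      ((k * Real.exp x) * (1 - Real.exp x) + (k * Real.exp x) * (0 - Real.exp x)) x :=
    ((Real.hasDerivAt_exp x).const_mul k).mul
      ((hasDerivAt_const x (1:ℝ)).sub (Real.hasDerivAt_exp x))
  have hden : HasDerivAt (fun y : ℝ => (1 + Real.exp y) ^ 3)
      (3 * (1 + Real.exp x) ^ 2 * Real.exp x) x := h2.pow 3
  have hne : ((1 + Real.exp x) ^ 3) ≠ 0 := pow_ne_zero 3 (one_add_exp_ne x)
  have := hnum.div hden hne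
  refine this.congr_deriv ?_
  have h0 := one_add_exp_ne x
  field_simp
  ring

/-- For k < -4, the Schwarzian derivative of f is strictly negative at every
point where f'(x) ≠ 0, with the explicit formula
Sf(x) = k e^x (2(e^x-1)² - (k+4)e^x) / (2((e^x+1)² + k e^x)²). -/
theorem schwarzian_negative (b k : ℝ) (hk : k < -4) :
    ∀ x : ℝ, deriv (fun y : ℝ => b + y - k / (1 + Real.exp y)) x ≠ 0 →
      (deriv (deriv (deriv (fun y : ℝ => b + y - k / (1 + Real.exp y)))) x /
          deriv (fun y : ℝ => b + y - k / (1 + Real.exp y)) x -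
        (3 / 2) *
          (deriv (deriv (fun y : ℝ => b + y - k / (1 + Real.exp y))) x /
            deriv (fun y : ℝ => b + y - k / (1 + Real.exp y)) x) ^ 2 =
        k * Real.exp x * (2 * (Real.exp x - 1) ^ 2 - (k + 4) * Real.exp x) /
          (2 * ((Real.exp x + 1) ^ 2 + k * Real.exp x) ^ 2)) ∧
      k * Real.exp x * (2 * (Real.exp x - 1) ^ 2 - (k + 4) * Real.exp x) /
          (2 * ((Real.exp x + 1) ^ 2 + k * Real.exp x) ^ 2) < 0 := by
  have hD1 : deriv (fun y : ℝ => b + y - k / (1 + Real.exp y))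
      = fun x => 1 + k * Real.exp x / (1 + Real.exp x) ^ 2 :=
    funext fun x => (hd_f b k x).deriv
  have hD2 : deriv (deriv (fun y : ℝ => b + y - k / (1 + Real.exp y)))
      = fun x => k * Real.exp x * (1 - Real.exp x) / (1 + Real.exp x) ^ 3 := by
    rw [hD1]; exact funext fun x => (hd_g1 k x).deriv
  have hD3 : deriv (deriv (deriv (fun y : ℝ => b + y - k / (1 + Real.exp y))))
      = fun x => k * Real.exp x * (1 - 4 * Real.exp x + Real.exp x ^ 2) / (1 + Real.exp x) ^ 4 := by
    rw [hD2]; exact funext fun x => (hd_g2 k x).deriv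
  intro x hne
  set u := Real.exp x with hu
  have hu0 : 0 < u := Real.exp_pos x
  have h1 : (1 + u) ≠ 0 := by positivity
  have hDval : deriv (fun y : ℝ => b + y - k / (1 + Real.exp y)) x
      = ((1 + u) ^ 2 + k * u) / (1 + u) ^ 2 := by
    rw [hD1]; simp only [← hu]; field_simp
  have hDne : ((1 + u) ^ 2 + k * u) ≠ 0 := by
    intro h
    apply hne
    rw [hDval, h, zero_div]
  have hDne' : ((u + 1) ^ 2 + k * u) ≠ 0 := by
    intro h; apply hDne; rw [← h]; ring
  constructor
  · rw [hD3, hD2, hD1]; simp only [← hu]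
    field_simp
    ring
  · apply div_neg_of_neg_of_pos
    · have h2 : 0 < 2 * (u - 1) ^ 2 - (k + 4) * u := by nlinarith
      have hku : k * u < 0 := mul_neg_of_neg_of_pos (by linarith) hu0
      exact mul_neg_of_neg_of_pos hku h2
    · have h2 : 0 < ((u + 1) ^ 2 + k * u) ^ 2 :=
        lt_of_le_of_ne (sq_nonneg _) (Ne.symm (pow_ne_zero 2 hDne'))
      linarith
end
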